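/- Let R be a π-torsion-free ring and q̂ a power of a prime. Suppose f = Σ_{i≥0} b_i τ^i intertwines φ_E(t) = π τ^0 + Σ_{j≥1} a_j τ^j and φ_G(t) = π τ^0 + Σ_{j≥1} c_j τ^j, i.e. f ∘ φ_E(t) = φ_G(t) ∘ f in the twisted power series ring. If 1 - π^{q^r - 1} is invertible in R for all r ≥ 1, then for every r ≥ 1, b_r is uniquely determined by b_0, ..., b_{r-1} via b_r (π - π^{q^r}) = Σ_{i=0}^{r-1} (b_i a_{r-i}^{q^i} - c_{r-i} b_i^{q^{r-i}}). In particular f is determined by its linear coefficient b_0. -/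

import Mathlib

/-- Multiplication (= composition of additive power series) in the twisted power series ring
`R{τ}` with commutation law `τ b = b^q τ`: the `τ^n`-coefficient of `f·g` is
`Σ_{i+j=n} fᵢ · (gⱼ)^(q^i)`. -/
def tcomp (R : Type*) [CommRing R] (q : ℕ) (f g : ℕ → R) : ℕ → R :=
  fun n => ∑ i ∈ Finset.range (n + 1), f i * (g (n - i)) ^ q ^ i

lemma tcomp_key (R : Type*) [CommRing R] (q : ℕ) (π : R)
    (a c b : ℕ → R) (ha0 : a 0 = π) (hc0 : c 0 = π)
    (hcomm : ∀ n, tcomp R q b a n = tcomp R q c b n)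
    (r : ℕ) (hr : 1 ≤ r) :
    b r * (π - π ^ q ^ r) =
      ∑ i ∈ Finset.range r,
        (b i * (a (r - i)) ^ q ^ i - c (r - i) * (b i) ^ q ^ (r - i)) := by
  have h := hcomm r
  unfold tcomp at h
  rw [Finset.sum_range_succ] at h
  rw [Finset.sum_range_succ'] at h
  simp only [Nat.sub_self, ha0, hc0, pow_zero, pow_one, Nat.sub_zero] at h
  have hre : ∑ i ∈ Finset.range r, c (i + 1) * b (r - (i + 1)) ^ q ^ (i + 1)
      = ∑ j ∈ Finset.range r, c (r - j) * b j ^ q ^ (r - j) := by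
    rw [← Finset.sum_range_reflect]
    apply Finset.sum_congr rfl
    intro j hj
    have hj' : j < r := Finset.mem_range.mp hj
    have e1 : r - 1 - j + 1 = r - j := by omega
    have e2 : r - (r - j) = j := by omega
    rw [e1, e2]
  rw [hre] at h
  rw [Finset.sum_sub_distrib]
  linear_combination -h

/-- Proposition (tangent): let `R` be π-torsion free with `1 - π^(q^r - 1)` invertible for all
`r ≥ 1`.  If `f = Σ bᵢ τ^i` intertwines `φ_E(t) = π τ^0 + Σ_{j≥1} aⱼ τ^j` and
`φ_G(t) = π τ^0 + Σ_{j≥1} cⱼ τ^j`, i.e. `f ∘ φ_E(t) = φ_G(t) ∘ f`, then for every `r ≥ 1`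
we have `b_r (π - π^(q^r)) = Σ_{i=0}^{r-1} (bᵢ a_{r-i}^(q^i) - c_{r-i} bᵢ^(q^{r-i}))`,
so each `b_r` is determined by `b₀,…,b_{r-1}`; in particular `f` is determined by `b₀`. -/
theorem stmt2 (R : Type*) [CommRing R] (q : ℕ) (π : R)
    (htf : ∀ x : R, π * x = 0 → x = 0)
    (hinv : ∀ r : ℕ, 1 ≤ r → IsUnit (1 - π ^ (q ^ r - 1)))
    (a c b : ℕ → R) (ha0 : a 0 = π) (hc0 : c 0 = π)
    (hcomm : ∀ n, tcomp R q b a n = tcomp R q c b n) :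
    (∀ r : ℕ, 1 ≤ r →
      b r * (π - π ^ q ^ r) =
        ∑ i ∈ Finset.range r,
          (b i * (a (r - i)) ^ q ^ i - c (r - i) * (b i) ^ q ^ (r - i))) ∧
    (∀ b' : ℕ → R, (∀ n, tcomp R q b' a n = tcomp R q c b' n) → b' 0 = b 0 → b' = b) := by
  constructor
  · exact tcomp_key R q π a c b ha0 hc0 hcomm
  · intro b' hcomm' h0
    rcases Nat.eq_zero_or_pos q with hq | hq
    · -- R is trivial
      have hu0 : IsUnit (0 : R) := by simpa [hq] using hinv 1 le_rfl
      have this : (0 : R) = 1 := isUnit_zero_iff.mp hu0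
      funext n
      calc b' n = b' n * 1 := by ring
        _ = b' n * 0 := by rw [this]
        _ = b n * 0 := by ring
        _ = b n * 1 := by rw [this]
        _ = b n := by ring
    · funext n
      induction n using Nat.strong_induction_on with
      | _ n ih =>
        rcases Nat.eq_zero_or_pos n with rfl | hn
        · exact h0
        · have h1 := tcomp_key R q π a c b ha0 hc0 hcomm n hn
          have h2 := tcomp_key R q π a c b' ha0 hc0 hcomm' n hn
          have hsame : ∑ i ∈ Finset.range n,
              (b' i * (a (n - i)) ^ q ^ i - c (n - i) * (b' i) ^ q ^ (n - i))
              = ∑ i ∈ Finset.range n,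
              (b i * (a (n - i)) ^ q ^ i - c (n - i) * (b i) ^ q ^ (n - i)) := by
            apply Finset.sum_congr rfl
            intro i hi
            rw [ih i (Finset.mem_range.mp hi)]
          rw [hsame, ← h1] at h2
          -- h2 : b' n * (π - π^q^n) = b n * (π - π^q^n)
          have hqn : 1 ≤ q ^ n := Nat.one_le_pow _ _ hq
          have hfac : π - π ^ q ^ n = π * (1 - π ^ (q ^ n - 1)) := by
            have : π ^ q ^ n = π * π ^ (q ^ n - 1) := by
              rw [← pow_succ']
              congr 1
              omega
            rw [this]; ring
          rw [hfac] at h2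
          have hu := hinv n hn
          have h3 : π * ((b' n - b n) * (1 - π ^ (q ^ n - 1))) = 0 := by
            linear_combination h2
          have h4 := htf _ h3
          have h5 : (1 - π ^ (q ^ n - 1)) * (b' n - b n) = 0 := by linear_combination h4
          have h6 : b' n - b n = 0 := (hu.mul_right_eq_zero).mp h5
          exact sub_eq_zero.mp h6
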